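/- For fixed real p > 0, the sequence n ↦ λ⁽ⁿ⁾(p) of dominant roots of λ^n - p(λ^(n-1) + ⋯ + 1) is strictly increasing in n (for n such that p·n > 1) and converges to p + 1 as n → ∞. -/

import Mathlib

open Finset Filter

private lemma key_eq (p x : ℝ) (hx : 0 < x) (n : ℕ)
    (h : x ^ n = p * ∑ k ∈ Finset.range n, x ^ k) :
    p * ∑ j ∈ Finset.range n, (x⁻¹) ^ (j + 1) = 1 := by
  have hx0 : x ≠ 0 := ne_of_gt hx
  have hsum : ∑ j ∈ Finset.range n, (x⁻¹) ^ (j + 1)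
      = (∑ k ∈ Finset.range n, x ^ k) * (x⁻¹) ^ n := by
    rw [Finset.sum_mul,
      ← Finset.sum_range_reflect (fun k => x ^ k * (x⁻¹) ^ n) n]
    apply Finset.sum_congr rfl
    intro j hj
    have hj' : j < n := Finset.mem_range.1 hj
    set m := n - 1 - j with hm0
    have hm : m + (j + 1) = n := by omega
    rw [← hm, pow_add x⁻¹ m (j + 1), ← mul_assoc, ← mul_pow, mul_inv_cancel₀ hx0,
      one_pow, one_mul]
  rw [hsum, ← mul_assoc, ← h, ← mul_pow, mul_inv_cancel₀ hx0, one_pow]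

private lemma geomS_lt (r : ℝ) (h0 : 0 < r) (h1 : r < 1) (n : ℕ) :
    ∑ j ∈ Finset.range n, r ^ (j + 1) < r / (1 - r) := by
  have hr : 0 < 1 - r := by linarith
  have hg : ∑ j ∈ Finset.range n, r ^ j = (1 - r ^ n) / (1 - r) := by
    rw [geom_sum_eq (ne_of_lt h1)]
    rw [div_eq_div_iff (by linarith) (by linarith)]
    ring
  have h2 : ∑ j ∈ Finset.range n, r ^ (j + 1) = r * ((1 - r ^ n) / (1 - r)) := by
    rw [← hg, Finset.mul_sum]
    exact Finset.sum_congr rfl fun j _ => (pow_succ' r j)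
  rw [h2, ← mul_div_assoc, div_lt_div_iff₀ hr hr]
  nlinarith [mul_pos (mul_pos h0 hr) (pow_pos h0 n)]


theorem stmt_7 (p : ℝ) (hp : 0 < p) (f : ℕ → ℝ)
    (hf : ∀ n : ℕ, 1 ≤ n → 0 < f n ∧
      (f n) ^ n - p * ∑ k ∈ Finset.range n, (f n) ^ k = 0) :
    (∀ m n : ℕ, 1 ≤ m → m < n → 1 < p * m → f m < f n) ∧
    Filter.Tendsto f Filter.atTop (nhds (p + 1)) := by
  have hp0 : p ≠ 0 := ne_of_gt hp
  -- the reciprocal equation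
  have hS : ∀ n : ℕ, 1 ≤ n → ∑ j ∈ Finset.range n, ((f n)⁻¹) ^ (j + 1) = p⁻¹ := by
    intro n hn
    obtain ⟨hpos, heq⟩ := hf n hn
    have h := key_eq p (f n) hpos n (by linarith)
    field_simp at h ⊢
    linarith
  have upos : ∀ n : ℕ, 1 ≤ n → 0 < (f n)⁻¹ := fun n hn => inv_pos.2 (hf n hn).1
  -- weak monotonicity in x
  have smw : ∀ (n : ℕ) (x y : ℝ), 0 ≤ x → x ≤ y →
      ∑ j ∈ Finset.range n, x ^ (j + 1) ≤ ∑ j ∈ Finset.range n, y ^ (j + 1) :=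
    fun n x y hx hxy => Finset.sum_le_sum fun j _ => pow_le_pow_left₀ hx hxy _
  -- strict monotonicity in n
  have snm : ∀ (m n : ℕ) (x : ℝ), m < n → 0 < x →
      ∑ j ∈ Finset.range m, x ^ (j + 1) < ∑ j ∈ Finset.range n, x ^ (j + 1) := by
    intro m n x hmn hx
    exact Finset.sum_lt_sum_of_subset (f := fun j => x ^ (j + 1))
      (Finset.range_subset_range.2 hmn.le) (Finset.mem_range.2 hmn) (by simp) (pow_pos hx _)
      (fun j _ _ => (pow_pos hx _).le)
  constructor
  · intro m n hm hmn _
    have hn : 1 ≤ n := hm.trans hmn.le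
    by_contra hcon
    push_neg at hcon
    have h1 : (f m)⁻¹ ≤ (f n)⁻¹ := inv_anti₀ (hf n hn).1 hcon
    have h2 : ∑ j ∈ Finset.range n, ((f m)⁻¹) ^ (j + 1)
        ≤ ∑ j ∈ Finset.range n, ((f n)⁻¹) ^ (j + 1) :=
      smw n _ _ (upos m hm).le h1
    have h3 := snm m n ((f m)⁻¹) hmn (upos m hm)
    rw [hS m hm, hS n hn] at *
    linarith
  · -- convergence
    set a : ℝ := (p + 1)⁻¹ with ha
    have hp1 : (0:ℝ) < p + 1 := by linarith
    have ha0 : 0 < a := inv_pos.2 hp1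
    have ha1 : a < 1 := inv_lt_one_of_one_lt₀ (by linarith)
    have haq : a / (1 - a) = p⁻¹ := by
      rw [ha]; field_simp; rw [add_sub_cancel_right, div_self hp0]
    have hu : Filter.Tendsto (fun n => (f n)⁻¹) Filter.atTop (nhds a) := by
      rw [Metric.tendsto_atTop]
      intro ε hε
      set b : ℝ := min (a + ε / 2) ((a + 1) / 2) with hb
      have hab : a < b := lt_min (by linarith) (by linarith)
      have hb1 : b < 1 := (min_le_right _ _).trans_lt (by linarith)
      have hb0 : 0 < b := ha0.trans hab
      have hbe : b < a + ε := (min_le_left _ _).trans_lt (by linarith)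
      have hq : p⁻¹ < b / (1 - b) := by
        rw [← haq, div_lt_div_iff₀ (by linarith) (by linarith)]
        nlinarith
      have hgeo : Filter.Tendsto (fun n => ∑ j ∈ Finset.range n, b ^ (j + 1))
          Filter.atTop (nhds (b / (1 - b))) := by
        have h := ((hasSum_geometric_of_lt_one hb0.le hb1).tendsto_sum_nat).const_mul b
        have heq : (fun n => b * ∑ j ∈ Finset.range n, b ^ j)
            = fun n => ∑ j ∈ Finset.range n, b ^ (j + 1) := by
          funext n
          rw [Finset.mul_sum]
          exact Finset.sum_congr rfl fun j _ => (pow_succ' b j).symm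
        rw [heq] at h
        rw [show b / (1 - b) = b * (1 - b)⁻¹ from div_eq_mul_inv _ _]
        exact h
      have hev : ∀ᶠ n in Filter.atTop, p⁻¹ < ∑ j ∈ Finset.range n, b ^ (j + 1) :=
        hgeo.eventually (eventually_gt_nhds hq)
      obtain ⟨N, hN⟩ := Filter.eventually_atTop.1 hev
      refine ⟨max N 1, fun n hn => ?_⟩
      have hn1 : 1 ≤ n := le_trans (le_max_right _ _) hn
      have hnN : N ≤ n := le_trans (le_max_left _ _) hn
      have hlow : a < (f n)⁻¹ := by
        by_contra hcon
        push_neg at hcon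
        have h1 : ∑ j ∈ Finset.range n, ((f n)⁻¹) ^ (j + 1)
            ≤ ∑ j ∈ Finset.range n, a ^ (j + 1) := smw n _ _ (upos n hn1).le hcon
        have h2 := geomS_lt a ha0 ha1 n
        rw [hS n hn1] at h1
        rw [haq] at h2
        linarith
      have hhigh : (f n)⁻¹ < b := by
        by_contra hcon
        push_neg at hcon
        have h1 : ∑ j ∈ Finset.range n, b ^ (j + 1)
            ≤ ∑ j ∈ Finset.range n, ((f n)⁻¹) ^ (j + 1) := smw n _ _ hb0.le hcon
        rw [hS n hn1] at h1
        exact absurd (hN n hnN) (by linarith)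
      rw [Real.dist_eq, abs_sub_lt_iff]
      constructor <;> linarith
    have h2 := hu.inv₀ (ne_of_gt ha0)
    simp only [inv_inv, ha] at h2
    exact h2
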